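/- Let V be the Volterra operator on S with a_{ki} = −1 for all i > k, i.e. (V(x))₁ = x₁² and (V(x))_k = x_k² + 2x_k Σ_{i<k} x_i for k ≥ 2. Then for all m, n ∈ ℕ and x ∈ S: Σ_{k=1}^m (Vⁿ(x))_k = (Σ_{k=1}^m x_k)^{2ⁿ}. -/
import Mathlib

lemma sq_sum_aux (y : ℕ → ℝ) : ∀ m, ∑ k ∈ Finset.range m,
    (y k ^ 2 + 2 * y k * ∑ i ∈ Finset.range k, y i) =
    (∑ k ∈ Finset.range m, y k) ^ 2 := by
  intro m
  induction m with
  | zero => simp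
  | succ m ih => rw [Finset.sum_range_succ, ih, Finset.sum_range_succ]; ring

theorem stmt_12 (V : (ℕ → ℝ) → (ℕ → ℝ))
    (hV : ∀ x k, V x k = x k ^ 2 + 2 * x k * ∑ i ∈ Finset.range k, x i)
    (x : ℕ → ℝ) (hx : (∀ k, 0 ≤ x k) ∧ Summable x ∧ ∑' k, x k = 1) :
    ∀ m n : ℕ, ∑ k ∈ Finset.range m, (V^[n] x) k =
      (∑ k ∈ Finset.range m, x k) ^ (2 ^ n) := by
  intro m n
  induction n with
  | zero => simp
  | succ n ih =>
    rw [Function.iterate_succ_apply']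
    have : ∑ k ∈ Finset.range m, V (V^[n] x) k =
        (∑ k ∈ Finset.range m, (V^[n] x) k) ^ 2 := by
      rw [← sq_sum_aux (V^[n] x) m]
      exact Finset.sum_congr rfl fun k _ => hV _ k
    rw [this, ih, ← pow_mul, pow_succ]
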